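/- Fix θ ∈ (0, π] and define ρ_θ(x) = x·sin(2π/x) − (x−2)·sin((2π−θ)/(x−2)) for real x ≥ 4. Then ρ_θ attains its minimum on [4, ∞) at x = 4π/θ, and the minimum value is 2·sin(θ/2). -/

import Mathlib

open Real

noncomputable def ρ (θ x : ℝ) : ℝ :=
  x * Real.sin (2 * π / x) - (x - 2) * Real.sin ((2 * π - θ) / (x - 2))

theorem stmt17 (θ : ℝ) (hθ0 : 0 < θ) (hθ : θ ≤ π) :
    (∀ x : ℝ, 4 ≤ x → 2 * Real.sin (θ / 2) ≤ ρ θ x) ∧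
    ρ θ (4 * π / θ) = 2 * Real.sin (θ / 2) := by
  have hπ := Real.pi_pos
  constructor
  · intro x hx
    have hx0 : (0:ℝ) < x := by linarith
    have hx2 : (0:ℝ) < x - 2 := by linarith
    set v := (2 * π - θ) / (x - 2) with hvdef
    have hconc := strictConcaveOn_sin_Icc.concaveOn
    have hv : v ∈ Set.Icc 0 π := by
      constructor
      · exact div_nonneg (by linarith) hx2.le
      · rw [div_le_iff₀ hx2]; nlinarith
    have hw : θ / 2 ∈ Set.Icc 0 π := ⟨by linarith, by linarith⟩
    have ha : (0:ℝ) ≤ (x - 2) / x := by positivity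
    have hb : (0:ℝ) ≤ 2 / x := by positivity
    have hab : (x - 2) / x + 2 / x = 1 := by field_simp; ring
    have key := hconc.2 hv hw ha hb hab
    simp only [smul_eq_mul] at key
    have heq : (x - 2) / x * v + 2 / x * (θ / 2) = 2 * π / x := by
      rw [hvdef]; field_simp; ring
    rw [heq] at key
    have key2 : (x - 2) * Real.sin v + 2 * Real.sin (θ / 2)
        ≤ x * Real.sin (2 * π / x) := by
      have h := mul_le_mul_of_nonneg_left key hx0.le
      calc (x - 2) * Real.sin v + 2 * Real.sin (θ / 2)
          = x * ((x - 2) / x * Real.sin v + 2 / x * Real.sin (θ / 2)) := by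
            field_simp
        _ ≤ x * Real.sin (2 * π / x) := h
    unfold ρ
    linarith
  · have hθ2 : (0:ℝ) < 2 * π - θ := by linarith
    have h1 : 2 * π / (4 * π / θ) = θ / 2 := by
      field_simp; ring
    have h2 : (2 * π - θ) / (4 * π / θ - 2) = θ / 2 := by
      rw [div_eq_iff]
      · field_simp; ring
      · intro h
        have : 4 * π / θ = 2 := by linarith
        have : 4 * π = 2 * θ := by
          field_simp at this; linarith
        linarith
    unfold ρ
    rw [h1, h2]
    have : 4 * π / θ - 2 = 2 * (2 * π - θ) / θ := by field_simp; ring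
    rw [this]
    field_simp
    ring
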